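/- Let s, t be positive real numbers with s + t > 1, s ≠ 1, t ≠ 1. Define α(u) = s²(s-1)²u² - 2st(st + s + t - 1)u + t²(t-1)², let (m, M) be the open interval on which α < 0, and define β(u) = -4u²(su + t)²s²t²(st(s + t - 1))²/(α(u))³ for u ∈ (m, M). Then β attains a strict global minimum on (m, M) at a unique point; that is, there exists a unique u* ∈ (m, M) such that β(u) > β(u*) for all u ∈ (m, M) with u ≠ u*. -/

import Mathlib

set_option maxHeartbeats 2000000 in
theorem minimal_area_circumscribed_unique (s t : ℝ) (hs : 0 < s) (ht : 0 < t)
    (hst : s + t > 1) (hs1 : s ≠ 1) (ht1 : t ≠ 1)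
    (α β : ℝ → ℝ)
    (hα : ∀ u, α u = s^2*(s-1)^2*u^2 - 2*s*t*(s*t + s + t - 1)*u + t^2*(t-1)^2)
    (hβ : ∀ u, β u = -(4*u^2*(s*u + t)^2*s^2*t^2*(s*t*(s + t - 1))^2) / (α u)^3)
    (m M : ℝ) (hI : ∀ u : ℝ, α u < 0 ↔ u ∈ Set.Ioo m M) :
    ∃! u₀ : ℝ, u₀ ∈ Set.Ioo m M ∧
      ∀ u ∈ Set.Ioo m M, u ≠ u₀ → β u₀ < β u := by
  have hs1' : s - 1 ≠ 0 := sub_ne_zero.mpr hs1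
  have ht1' : t - 1 ≠ 0 := sub_ne_zero.mpr ht1
  have hst' : 0 < s + t - 1 := by linarith
  obtain ⟨A, hAdef⟩ : ∃ A : ℝ, A = s^2*(s-1)^2 := ⟨_, rfl⟩
  obtain ⟨Bc, hBdef⟩ : ∃ Bc : ℝ, Bc = 2*s*t*(s*t + s + t - 1) := ⟨_, rfl⟩
  obtain ⟨Cc, hCdef⟩ : ∃ Cc : ℝ, Cc = t^2*(t-1)^2 := ⟨_, rfl⟩
  simp only [← hAdef, ← hBdef, ← hCdef] at hα
  have hA : 0 < A := by rw [hAdef]; positivity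
  have hC : 0 < Cc := by rw [hCdef]; positivity
  have hB : 0 < Bc := by rw [hBdef]; nlinarith [mul_pos hs ht]
  have hDpos : 0 < Bc^2 - 4*A*Cc := by
    have h : Bc^2 - 4*A*Cc = 16*(s*s*s)*(t*t*t)*(s+t-1) := by
      rw [hAdef, hBdef, hCdef]; ring
    rw [h]; positivity
  obtain ⟨sd, hsddef⟩ : ∃ sd : ℝ, sd = Real.sqrt (Bc^2 - 4*A*Cc) := ⟨_, rfl⟩
  have hsd2 : sd^2 = Bc^2 - 4*A*Cc := by rw [hsddef]; exact Real.sq_sqrt hDpos.le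
  have hsdpos : 0 < sd := by rw [hsddef]; exact Real.sqrt_pos.mpr hDpos
  clear hsddef
  obtain ⟨r, hrdef⟩ : ∃ r : ℝ, r = (Bc - sd)/(2*A) := ⟨_, rfl⟩
  obtain ⟨R, hRdef⟩ : ∃ R : ℝ, R = (Bc + sd)/(2*A) := ⟨_, rfl⟩
  have h2A : (0:ℝ) < 2*A := by linarith
  have hrR : r < R := by
    rw [hrdef, hRdef]
    have h : (Bc + sd)/(2*A) - (Bc - sd)/(2*A) = sd/A := by field_simp; ring
    have := div_pos hsdpos hA
    linarith
  have hBsum : Bc = A*(r+R) := by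
    rw [hrdef, hRdef]; field_simp; ring
  have hCprod : Cc = A*(r*R) := by
    rw [hrdef, hRdef]; field_simp; linear_combination hsd2
  have hfact : ∀ u, A*u^2 - Bc*u + Cc = A*(u-r)*(u-R) := by
    intro u; linear_combination (-u) * hBsum + hCprod
  have hIoo : ∀ u, α u < 0 ↔ u ∈ Set.Ioo r R := by
    intro u
    rw [hα, hfact u, Set.mem_Ioo]
    constructor
    · intro h
      constructor
      · by_contra h'
        push_neg at h'
        nlinarith [mul_nonneg (sub_nonneg.mpr h') (le_of_lt (show (0:ℝ) < R - u by linarith)), hA.le]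
      · by_contra h'
        push_neg at h'
        nlinarith [mul_nonneg (le_of_lt (show (0:ℝ) < u - r by nlinarith)) (sub_nonneg.mpr h'), hA.le]
    · rintro ⟨h1, h2⟩
      nlinarith [mul_pos (show (0:ℝ) < u - r by linarith) (show (0:ℝ) < R - u by linarith)]
  have hsetEq : Set.Ioo m M = Set.Ioo r R := by
    ext u; rw [← hI u, hIoo u]
  have hmM : m < M := by
    rcases Set.nonempty_Ioo.2 hrR with ⟨x, hx⟩
    have hx' : x ∈ Set.Ioo m M := hsetEq ▸ hx
    exact lt_trans hx'.1 hx'.2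
  have hm : m = r := by
    have h1 := csInf_Ioo hmM
    have h2 := csInf_Ioo hrR
    rw [hsetEq] at h1
    rw [h1] at h2; exact h2
  have hM : M = R := by
    have h1 := csSup_Ioo hmM
    have h2 := csSup_Ioo hrR
    rw [hsetEq] at h1
    rw [h1] at h2; exact h2
  have hr0 : 0 < r := by
    by_contra h
    push_neg at h
    have hR0 : R < 0 := by
      by_contra h2
      push_neg at h2
      nlinarith [mul_nonneg (mul_nonneg hA.le h2) (neg_nonneg.mpr h)]
    nlinarith [mul_pos hA (show 0 < -(r+R) by linarith)]
  have hR0 : 0 < R := lt_trans hr0 hrR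
  have hapr : 2*A*r - Bc < 0 := by nlinarith [mul_pos hA (sub_pos.mpr hrR)]
  have haPR : 0 < 2*A*R - Bc := by nlinarith [mul_pos hA (sub_pos.mpr hrR)]
  obtain ⟨q, hqdef⟩ : ∃ q : ℝ → ℝ, q = fun u => 2*A*s*u^3 + (4*A*t + Bc*s)*u^2 - (Bc*t + 4*Cc*s)*u - 2*Cc*t := ⟨_, rfl⟩
  have hmono : ∀ u v : ℝ, 0 < u → u < v → q u * v^2 < q v * u^2 := by
    intro u v hu huv
    have hv : 0 < v := lt_trans hu huv
    have key : q v * u^2 - q u * v^2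
        = (v - u) * (2*A*s*(u^2*v^2) + (Bc*t + 4*Cc*s)*(u*v) + 2*Cc*t*(u+v)) := by
      rw [hqdef]; ring
    nlinarith [mul_pos (sub_pos.mpr huv)
      (show 0 < 2*A*s*(u^2*v^2) + (Bc*t + 4*Cc*s)*(u*v) + 2*Cc*t*(u+v) by
        nlinarith [mul_pos (mul_pos (mul_pos hA hs) (mul_pos hu hv)) (mul_pos hu hv),
          mul_pos (mul_pos hB ht) (mul_pos hu hv), mul_pos (mul_pos hC hs) (mul_pos hu hv),
          mul_pos (mul_pos hC ht) hu, mul_pos (mul_pos hC ht) hv])]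
  have hαr : A*r^2 - Bc*r + Cc = 0 := by rw [hfact r]; ring
  have hαR : A*R^2 - Bc*R + Cc = 0 := by rw [hfact R]; ring
  have hgr : 0 < r*(s*r+t) := mul_pos hr0 (by nlinarith)
  have hgR : 0 < R*(s*R+t) := mul_pos hR0 (by nlinarith)
  have hidr : (r*(s*r+t)) * q r = 3*(r*(s*r+t))^2*(2*A*r - Bc) := by
    rw [hqdef]; linear_combination (-(2*r*(s*r+t)*(2*s*r+t))) * hαr
  have hidR : (R*(s*R+t)) * q R = 3*(R*(s*R+t))^2*(2*A*R - Bc) := by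
    rw [hqdef]; linear_combination (-(2*R*(s*R+t)*(2*s*R+t))) * hαR
  have hqr : q r < 0 := by
    by_contra h
    push_neg at h
    nlinarith [mul_nonneg hgr.le h, mul_pos (mul_pos (by norm_num : (0:ℝ) < 3) (mul_pos hgr hgr)) (show 0 < Bc - 2*A*r by linarith)]
  have hqR : 0 < q R := by
    by_contra h
    push_neg at h
    nlinarith [mul_nonpos_of_nonneg_of_nonpos hgR.le h, mul_pos (mul_pos (by norm_num : (0:ℝ) < 3) (mul_pos hgR hgR)) haPR]
  have hqcont : Continuous q := by rw [hqdef]; fun_prop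
  obtain ⟨u₀, hu₀, hqu₀⟩ := intermediate_value_Ioo hrR.le hqcont.continuousOn ⟨hqr, hqR⟩
  have hu₀0 : 0 < u₀ := lt_trans hr0 hu₀.1
  have hqneg : ∀ u ∈ Set.Ioo r u₀, q u < 0 := by
    intro u hu
    have h := hmono u u₀ (lt_trans hr0 hu.1) hu.2
    rw [hqu₀] at h
    by_contra h'
    push_neg at h'
    nlinarith [mul_nonneg h' (sq_nonneg u₀)]
  have hqpos : ∀ u ∈ Set.Ioo u₀ R, 0 < q u := by
    intro u hu
    have h := hmono u₀ u hu₀0 hu.1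
    rw [hqu₀] at h
    by_contra h'
    push_neg at h'
    nlinarith [mul_nonneg (neg_nonneg.mpr h') (sq_nonneg u₀)]
  have hαneg : ∀ u ∈ Set.Ioo r R, A*u^2 - Bc*u + Cc < 0 := by
    intro u hu
    have h := (hIoo u).mpr hu
    rwa [hα] at h
  obtain ⟨F, hFdef⟩ : ∃ F : ℝ → ℝ,
      F = fun u => -(4*u^2*(s*u + t)^2*s^2*t^2*(s*t*(s + t - 1))^2) / (A*u^2 - Bc*u + Cc)^3 :=
    ⟨_, rfl⟩
  have hβF : ∀ u, β u = F u := by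
    intro u; rw [hβ, hα, hFdef]
  have hK : 0 < 4*s^2*t^2*(s*t*(s+t-1))^2 := by positivity
  have hderiv : ∀ u ∈ Set.Ioo r R,
      HasDerivAt F (((4*s^2*t^2*(s*t*(s+t-1))^2) * (A*u^2 - Bc*u + Cc)^2 * ((s*u^2+t*u) * q u))
        / ((A*u^2 - Bc*u + Cc)^3)^2) u := by
    intro u hu
    have hne : A*u^2 - Bc*u + Cc ≠ 0 := ne_of_lt (hαneg u hu)
    have h1 : HasDerivAt (fun x:ℝ => x^2) (2*u) u := by simpa using hasDerivAt_pow 2 u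
    have hg : HasDerivAt (fun x => s*x^2 + t*x) (2*s*u + t) u := by
      have h2 := (h1.const_mul s).add ((hasDerivAt_id u).const_mul t)
      exact h2.congr_deriv (by ring)
    have hN : HasDerivAt (fun x => -(4*x^2*(s*x + t)^2*s^2*t^2*(s*t*(s + t - 1))^2))
        ((-(4*s^2*t^2*(s*t*(s+t-1))^2)) * (2*(s*u^2 + t*u)*(2*s*u + t))) u := by
      have heq : (fun x => -(4*x^2*(s*x + t)^2*s^2*t^2*(s*t*(s + t - 1))^2))
          = fun x => (-(4*s^2*t^2*(s*t*(s+t-1))^2)) * (s*x^2+t*x)^2 := by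
        funext x; ring
      rw [heq]
      have h3 := (hg.pow 2).const_mul (-(4*s^2*t^2*(s*t*(s+t-1))^2))
      exact h3.congr_deriv (by simp only [Nat.reduceSub, Nat.cast_ofNat, pow_one])
    have hp : HasDerivAt (fun x => A*x^2 - Bc*x + Cc) (2*A*u - Bc) u := by
      have h2 := ((h1.const_mul A).sub ((hasDerivAt_id u).const_mul Bc)).add_const Cc
      exact h2.congr_deriv (by ring)
    have hp3 : HasDerivAt (fun x => (A*x^2 - Bc*x + Cc)^3)
        (3*(A*u^2 - Bc*u + Cc)^2*(2*A*u - Bc)) u := by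
      have h4 := hp.pow 3
      exact h4.congr_deriv (by norm_num)
    have h5 := hN.div hp3 (pow_ne_zero 3 hne)
    rw [hFdef]
    refine h5.congr_deriv ?_
    congr 1
    simp only [hqdef]
    ring
  have hFconts : ∀ x ∈ Set.Ioo r R, ContinuousAt F x := by
    intro x hx
    have hne : A*x^2 - Bc*x + Cc ≠ 0 := ne_of_lt (hαneg x hx)
    rw [hFdef]
    exact ContinuousAt.div (by fun_prop) (by fun_prop) (pow_ne_zero 3 hne)
  have hanti : StrictAntiOn F (Set.Ioc r u₀) := by
    have hsub : Set.Ioc r u₀ ⊆ Set.Ioo r R := fun x hx => ⟨hx.1, lt_of_le_of_lt hx.2 hu₀.2⟩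
    apply strictAntiOn_of_deriv_neg (convex_Ioc r u₀)
    · exact fun x hx => (hFconts x (hsub hx)).continuousWithinAt
    · intro x hx
      rw [interior_Ioc] at hx
      have hxI : x ∈ Set.Ioo r R := ⟨hx.1, lt_trans hx.2 hu₀.2⟩
      have hne : A*x^2 - Bc*x + Cc ≠ 0 := ne_of_lt (hαneg x hxI)
      rw [(hderiv x hxI).deriv]
      apply div_neg_of_neg_of_pos
      · apply mul_neg_of_pos_of_neg
        · exact mul_pos hK (pow_two_pos_of_ne_zero hne)
        · apply mul_neg_of_pos_of_neg
          · have hx0 : 0 < x := lt_trans hr0 hx.1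
            have e1 := mul_pos hs (pow_pos hx0 2)
            have e2 := mul_pos ht hx0
            linarith
          · exact hqneg x hx
      · exact pow_two_pos_of_ne_zero (pow_ne_zero 3 hne)
  have hmono2 : StrictMonoOn F (Set.Ico u₀ R) := by
    have hsub : Set.Ico u₀ R ⊆ Set.Ioo r R := fun x hx => ⟨lt_of_lt_of_le hu₀.1 hx.1, hx.2⟩
    apply strictMonoOn_of_deriv_pos (convex_Ico u₀ R)
    · exact fun x hx => (hFconts x (hsub hx)).continuousWithinAt
    · intro x hx
      rw [interior_Ico] at hx
      have hxI : x ∈ Set.Ioo r R := ⟨lt_trans hu₀.1 hx.1, hx.2⟩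
      have hne : A*x^2 - Bc*x + Cc ≠ 0 := ne_of_lt (hαneg x hxI)
      rw [(hderiv x hxI).deriv]
      apply div_pos
      · apply mul_pos (mul_pos hK (pow_two_pos_of_ne_zero hne))
        apply mul_pos
        · have hx0 : 0 < x := lt_trans hr0 hxI.1
          have e1 := mul_pos hs (pow_pos hx0 2)
          have e2 := mul_pos ht hx0
          linarith
        · exact hqpos x hx
      · exact pow_two_pos_of_ne_zero (pow_ne_zero 3 hne)
  have hu₀mem : u₀ ∈ Set.Ioo m M := by rw [hsetEq]; exact hu₀
  have hminall : ∀ u ∈ Set.Ioo m M, u ≠ u₀ → β u₀ < β u := by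
    intro u hu hne'
    rw [hsetEq] at hu
    rw [hβF, hβF]
    rcases lt_or_gt_of_ne hne' with h | h
    · exact hanti ⟨hu.1, h.le⟩ ⟨hu₀.1, le_refl u₀⟩ h
    · exact hmono2 ⟨le_refl u₀, hu₀.2⟩ ⟨h.le, hu.2⟩ h
  refine ⟨u₀, ⟨hu₀mem, hminall⟩, ?_⟩
  rintro u₁ ⟨h1mem, h1min⟩
  by_contra hne'
  have h2 := h1min u₀ hu₀mem (fun hh => hne' hh.symm)
  have h3 := hminall u₁ h1mem hne'
  linarith
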